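/- Let q ∈ (0,1) with q > 1/2, and let p ∈ Δ_2 with p_1 > p_2. Then G^n(p) converges to (1, 0, 0) as n → ∞. -/
import Mathlib


open Filter Topology

/-- The map G = (G₁,G₂,G₃) on ℝ³ (with parameter q):
G₁(x) = x₁² + 2q x₁ x₃, G₂(x) = x₂² + 2q x₂ x₃,
G₃(x) = x₃² + 2 x₁ x₂ + 2(1−q) x₁ x₃ + 2(1−q) x₂ x₃. -/
noncomputable def Gmap (q : ℝ) (x : ℝ × ℝ × ℝ) : ℝ × ℝ × ℝ :=
  (x.1 ^ 2 + 2 * q * x.1 * x.2.2,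
   x.2.1 ^ 2 + 2 * q * x.2.1 * x.2.2,
   x.2.2 ^ 2 + 2 * x.1 * x.2.1 + 2 * (1 - q) * x.1 * x.2.2
     + 2 * (1 - q) * x.2.1 * x.2.2)

/-- The open simplex Δ₂ ⊆ ℝ³. -/
def simplex2 : Set (ℝ × ℝ × ℝ) :=
  {p | p.1 + p.2.1 + p.2.2 = 1 ∧ 0 < p.1 ∧ 0 < p.2.1 ∧ 0 < p.2.2}

lemma Gmap_fst' (q : ℝ) (x : ℝ × ℝ × ℝ) :
    (Gmap q x).1 = x.1 * (x.1 + 2*q*x.2.2) := by simp only [Gmap]; ring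

lemma Gmap_snd' (q : ℝ) (x : ℝ × ℝ × ℝ) :
    (Gmap q x).2.1 = x.2.1 * (x.2.1 + 2*q*x.2.2) := by simp only [Gmap]; ring

lemma Gmap_step (q : ℝ) (hq0 : 0 < q) (hq1 : q < 1) (x : ℝ × ℝ × ℝ)
    (hx : x ∈ simplex2) (h : x.2.1 < x.1) :
    Gmap q x ∈ simplex2 ∧ (Gmap q x).2.1 < (Gmap q x).1 := by
  obtain ⟨hs, ha, hb, hc⟩ := hx
  refine ⟨⟨?_, ?_, ?_, ?_⟩, ?_⟩
  · show (x.1 ^ 2 + 2 * q * x.1 * x.2.2) + (x.2.1 ^ 2 + 2 * q * x.2.1 * x.2.2)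
      + (x.2.2 ^ 2 + 2 * x.1 * x.2.1 + 2 * (1 - q) * x.1 * x.2.2
        + 2 * (1 - q) * x.2.1 * x.2.2) = 1
    linear_combination (x.1 + x.2.1 + x.2.2 + 1) * hs
  · show 0 < x.1 ^ 2 + 2 * q * x.1 * x.2.2
    nlinarith [mul_pos ha hc, mul_pos hq0 (mul_pos ha hc), sq_nonneg x.1, mul_pos ha ha]
  · show 0 < x.2.1 ^ 2 + 2 * q * x.2.1 * x.2.2
    nlinarith [mul_pos hq0 (mul_pos hb hc), mul_pos hb hb]
  · show 0 < x.2.2 ^ 2 + 2 * x.1 * x.2.1 + 2 * (1 - q) * x.1 * x.2.2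
      + 2 * (1 - q) * x.2.1 * x.2.2
    nlinarith [mul_pos ha hb, mul_pos ha hc, mul_pos hb hc, mul_pos hc hc,
      mul_pos (mul_pos ha hc) (show (0:ℝ) < 1 - q by linarith),
      mul_pos (mul_pos hb hc) (show (0:ℝ) < 1 - q by linarith)]
  · show x.2.1 ^ 2 + 2 * q * x.2.1 * x.2.2 < x.1 ^ 2 + 2 * q * x.1 * x.2.2
    nlinarith [mul_pos (sub_pos.2 h)
      (show 0 < x.1 + x.2.1 + 2*q*x.2.2 by nlinarith [mul_pos hq0 hc])]

lemma key_tendsto (q : ℝ) (hq0 : 0 < q) (hq1 : q < 1) (hq : 1 / 2 < q)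
    (a b c : ℕ → ℝ)
    (hsum : ∀ n, a n + b n + c n = 1)
    (hapos : ∀ n, 0 < a n) (hbpos : ∀ n, 0 < b n) (hcpos : ∀ n, 0 < c n)
    (hlt : ∀ n, b n < a n)
    (hA : ∀ n, a (n+1) = a n * (a n + 2*q*c n))
    (hB : ∀ n, b (n+1) = b n * (b n + 2*q*c n)) :
    Tendsto a atTop (𝓝 1) ∧ Tendsto b atTop (𝓝 0) ∧ Tendsto c atTop (𝓝 0) := by
  have h2q : (0:ℝ) < 2*q - 1 := by linarith
  have hdpos : ∀ n, 0 < a n - b n := fun n => sub_pos.2 (hlt n)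
  have hD : ∀ n, a (n+1) - b (n+1) = (a n - b n) * (1 + (2*q-1)*c n) := by
    intro n
    rw [hA n, hB n]
    linear_combination (a n - b n) * hsum n
  have hmono : Monotone (fun n => a n - b n) := by
    apply monotone_nat_of_le_succ
    intro n
    have h := hD n
    nlinarith [mul_pos (mul_pos (hdpos n) (hcpos n)) h2q]
  have hdub : ∀ n, a n - b n ≤ 1 := fun n => by linarith [hsum n, hbpos n, hcpos n]
  have hbdd : BddAbove (Set.range fun n => a n - b n) := by
    refine ⟨1, ?_⟩
    rintro y ⟨n, rfl⟩
    exact hdub n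
  have hdten : Tendsto (fun n => a n - b n) atTop (𝓝 (⨆ n, a n - b n)) :=
    tendsto_atTop_ciSup hmono hbdd
  have hdiff0 : Tendsto (fun n => (a (n+1) - b (n+1)) - (a n - b n)) atTop (𝓝 0) := by
    have h1 : Tendsto (fun n => a (n+1) - b (n+1)) atTop (𝓝 (⨆ n, a n - b n)) :=
      hdten.comp (tendsto_add_atTop_nat 1)
    simpa using h1.sub hdten
  have hcten : Tendsto c atTop (𝓝 0) := by
    have hd00 : 0 < a 0 - b 0 := hdpos 0
    refine squeeze_zero (fun n => (hcpos n).le) (fun n => ?_)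
      (show Tendsto (fun n => ((a (n+1) - b (n+1)) - (a n - b n)) * (1/((2*q-1)*(a 0 - b 0))))
        atTop (𝓝 0) by simpa using hdiff0.mul_const (1/((2*q-1)*(a 0 - b 0))))
    have hd0n : a 0 - b 0 ≤ a n - b n := hmono (Nat.zero_le n)
    have hΔ : (a (n+1) - b (n+1)) - (a n - b n) = (a n - b n) * ((2*q-1) * c n) := by
      rw [hD n]; ring
    rw [hΔ, mul_one_div, le_div_iff₀ (mul_pos h2q hd00)]
    nlinarith [mul_nonneg (mul_pos h2q (hcpos n)).le (sub_nonneg.2 hd0n)]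
  set k : ℝ := 1 - (a 0 - b 0)/2 with hk
  have hk0 : 0 ≤ k := by have := hdub 0; simp only [hk]; linarith
  have hk1 : k < 1 := by have := hdpos 0; simp only [hk]; linarith
  have hr : ∀ n, b (n+1) / a (n+1) ≤ k * (b n / a n) := by
    intro n
    have hd0n : a 0 - b 0 ≤ a n - b n := hmono (Nat.zero_le n)
    have h2 : a n + 2*q*c n ≤ 2 := by
      nlinarith [mul_nonneg (show (0:ℝ) ≤ 1-q by linarith) (hcpos n).le,
        hsum n, hbpos n, hcpos n, hapos n]
    have h1 : b n + 2*q*c n ≤ k * (a n + 2*q*c n) := by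
      simp only [hk]
      nlinarith [mul_nonneg (hdpos 0).le (sub_nonneg.2 h2), hd0n]
    rw [mul_div_assoc' k (b n) (a n), div_le_div_iff₀ (hapos (n+1)) (hapos n)]
    calc b (n+1) * a n = (b n * a n) * (b n + 2*q*c n) := by rw [hB n]; ring
      _ ≤ (b n * a n) * (k * (a n + 2*q*c n)) :=
          mul_le_mul_of_nonneg_left h1 (mul_pos (hbpos n) (hapos n)).le
      _ = (k * b n) * a (n+1) := by rw [hA n]; ring
  have hrle : ∀ n, b n / a n ≤ (b 0 / a 0) * k^n := by
    intro n
    induction n with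
    | zero => simp
    | succ n ih =>
      calc b (n+1) / a (n+1) ≤ k * (b n / a n) := hr n
        _ ≤ k * ((b 0 / a 0) * k^n) := mul_le_mul_of_nonneg_left ih hk0
        _ = (b 0 / a 0) * k^(n+1) := by ring
  have hble : ∀ n, b n ≤ (b 0 / a 0) * k^n := by
    intro n
    have han1 : a n ≤ 1 := by linarith [hsum n, hbpos n, hcpos n]
    have h4 : b n ≤ b n / a n := by
      rw [le_div_iff₀ (hapos n)]
      nlinarith [hbpos n]
    linarith [hrle n]
  have hbten : Tendsto b atTop (𝓝 0) := by
    refine squeeze_zero (fun n => (hbpos n).le) hble ?_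
    have := (tendsto_pow_atTop_nhds_zero_of_lt_one hk0 hk1).const_mul (b 0 / a 0)
    simpa using this
  have haten : Tendsto a atTop (𝓝 1) := by
    have h5 : Tendsto (fun n => 1 - b n - c n) atTop (𝓝 1) := by
      have h6 := ((tendsto_const_nhds : Tendsto (fun _ : ℕ => (1:ℝ)) atTop (𝓝 1)).sub hbten).sub hcten
      simpa using h6
    exact h5.congr fun n => by linarith [hsum n]
  exact ⟨haten, hbten, hcten⟩

/-- If q > 1/2 and p₁ > p₂, then G^n(p) → (1,0,0). -/
theorem tendsto_first_state (q : ℝ) (hq0 : 0 < q) (hq1 : q < 1)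
    (hq : 1 / 2 < q) (p : ℝ × ℝ × ℝ) (hp : p ∈ simplex2) (h12 : p.2.1 < p.1) :
    Tendsto (fun n => (Gmap q)^[n] p) atTop (𝓝 ((1 : ℝ), (0 : ℝ), (0 : ℝ))) := by
  have hinv : ∀ n, (Gmap q)^[n] p ∈ simplex2 ∧ ((Gmap q)^[n] p).2.1 < ((Gmap q)^[n] p).1 := by
    intro n
    induction n with
    | zero => exact ⟨hp, h12⟩
    | succ n ih =>
      rw [Function.iterate_succ_apply']
      exact Gmap_step q hq0 hq1 _ ih.1 ih.2
  obtain ⟨ha, hb, hc⟩ := key_tendsto q hq0 hq1 hq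
    (fun n => ((Gmap q)^[n] p).1) (fun n => ((Gmap q)^[n] p).2.1) (fun n => ((Gmap q)^[n] p).2.2)
    (fun n => (hinv n).1.1) (fun n => (hinv n).1.2.1) (fun n => (hinv n).1.2.2.1)
    (fun n => (hinv n).1.2.2.2) (fun n => (hinv n).2)
    (fun n => by show ((Gmap q)^[n+1] p).1 = _; rw [Function.iterate_succ_apply', Gmap_fst'])
    (fun n => by show ((Gmap q)^[n+1] p).2.1 = _; rw [Function.iterate_succ_apply', Gmap_snd'])
  exact ha.prodMk_nhds (hb.prodMk_nhds hc)
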